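/- Let (ũ_k)_{k≥0} be the Lehmer sequence associated to ζ and η, and assume c₂ is odd. Then for every integer k ≥ 2, ρ(2^k) = 2^{max(k − ν₂(ũ_{ρ(4)}), 0)}·ρ(4). -/

import Mathlib

set_option maxHeartbeats 1600000

/- Auxiliary companion sequences: `Vs j = ζ^(2j) + η^(2j)` and
`Ws j = (ζ^(2j+1) + η^(2j+1))/(ζ+η)`, as integer sequences. -/
private def Vs (c₁ c₂ : ℤ) : ℕ → ℤ
  | 0 => 2
  | 1 => c₁ - 2*c₂
  | (j+2) => (c₁ - 2*c₂) * Vs c₁ c₂ (j+1) - c₂^2 * Vs c₁ c₂ j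

private def Ws (c₁ c₂ : ℤ) : ℕ → ℤ
  | 0 => 1
  | 1 => c₁ - 3*c₂
  | (j+2) => (c₁ - 2*c₂) * Ws c₁ c₂ (j+1) - c₂^2 * Ws c₁ c₂ j

section casts

variable {ζ η : ℂ} {c₁ c₂ : ℤ}

private lemma Vcast (hc₁ : (c₁ : ℂ) = (ζ + η) ^ 2) (hc₂ : (c₂ : ℂ) = ζ * η) :
    ∀ j, ((Vs c₁ c₂ j : ℤ) : ℂ) = ζ^(2*j) + η^(2*j) := by
  have key : ∀ j, ((Vs c₁ c₂ j : ℤ) : ℂ) = ζ^(2*j) + η^(2*j) ∧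
      ((Vs c₁ c₂ (j+1) : ℤ) : ℂ) = ζ^(2*(j+1)) + η^(2*(j+1)) := by
    intro j
    induction j with
    | zero =>
      constructor
      · show ((2:ℤ):ℂ) = _; push_cast; ring
      · show (((c₁ - 2*c₂ :ℤ)):ℂ) = _; push_cast; rw [hc₁, hc₂]; ring
    | succ n ih =>
      refine ⟨ih.2, ?_⟩
      show ((Vs c₁ c₂ (n+2) : ℤ) : ℂ) = _
      rw [Vs]
      push_cast
      rw [hc₁, hc₂]
      linear_combination ((ζ+η)^2 - 2*(ζ*η)) * ih.2 - (ζ*η)^2 * ih.1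
  exact fun j => (key j).1

private lemma Wcast (hadd : ζ + η ≠ 0) (hc₁ : (c₁ : ℂ) = (ζ + η) ^ 2)
    (hc₂ : (c₂ : ℂ) = ζ * η) :
    ∀ j, ((Ws c₁ c₂ j : ℤ) : ℂ) = (ζ^(2*j+1) + η^(2*j+1))/(ζ + η) := by
  have key : ∀ j, ((Ws c₁ c₂ j : ℤ) : ℂ) * (ζ + η) = ζ^(2*j+1) + η^(2*j+1) ∧
      ((Ws c₁ c₂ (j+1) : ℤ) : ℂ) * (ζ + η) = ζ^(2*(j+1)+1) + η^(2*(j+1)+1) := by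
    intro j
    induction j with
    | zero =>
      constructor
      · show ((1:ℤ):ℂ) * _ = _; push_cast; ring
      · show (((c₁ - 3*c₂ :ℤ)):ℂ) * _ = _; push_cast; rw [hc₁, hc₂]; ring
    | succ n ih =>
      refine ⟨ih.2, ?_⟩
      show ((Ws c₁ c₂ (n+2) : ℤ) : ℂ) * (ζ+η) = _
      rw [Ws]
      push_cast
      rw [hc₁, hc₂]
      linear_combination ((ζ+η)^2 - 2*(ζ*η)) * ih.2 - (ζ*η)^2 * ih.1
  intro j
  rw [eq_div_iff hadd]
  exact (key j).1

end casts

private lemma sub2 {ζ η : ℂ} (hadd : ζ + η ≠ 0) (hsub : ζ - η ≠ 0) : ζ^2 - η^2 ≠ 0 := by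
  have h : ζ^2 - η^2 = (ζ+η)*(ζ-η) := by ring
  rw [h]; exact mul_ne_zero hadd hsub

section identities

variable {ζ η : ℂ} {c₁ c₂ : ℤ} {u : ℕ → ℤ} {V W : ℕ → ℤ}
variable (hadd : ζ + η ≠ 0) (hsub : ζ - η ≠ 0)
variable (huo : ∀ n, Odd n → (u n : ℂ) = (ζ^n - η^n)/(ζ - η))
variable (hue : ∀ n, Even n → (u n : ℂ) = (ζ^n - η^n)/(ζ^2 - η^2))
variable (hc₁ : (c₁ : ℂ) = (ζ + η) ^ 2) (hc₂ : (c₂ : ℂ) = ζ * η)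
variable (hV : ∀ j, (V j : ℂ) = ζ^(2*j) + η^(2*j))
variable (hW : ∀ j, (W j : ℂ) = (ζ^(2*j+1) + η^(2*j+1))/(ζ + η))

include hadd hsub huo hue hc₁ hc₂

set_option linter.unusedSectionVars false

private lemma I1 (i : ℕ) : u (2*i+3) = c₁ * u (2*i+2) - c₂ * u (2*i+1) := by
  have h2 : ζ^2 - η^2 ≠ 0 := sub2 hadd hsub
  apply Int.cast_injective (α := ℂ)
  push_cast
  rw [huo _ ⟨i+1, by ring⟩, hue _ ⟨i+1, by ring⟩, huo _ ⟨i, by ring⟩, hc₁, hc₂]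
  field_simp
  ring

include hV in
private lemma I2 (j : ℕ) : u (4*j) = u (2*j) * V j := by
  have h2 : ζ^2 - η^2 ≠ 0 := sub2 hadd hsub
  apply Int.cast_injective (α := ℂ)
  push_cast
  rw [hue _ ⟨2*j, by ring⟩, hue _ ⟨j, by ring⟩, hV]
  field_simp
  ring

include hW in
private lemma I3 (j : ℕ) : u (4*j+2) = u (2*j+1) * W j := by
  have h2 : ζ^2 - η^2 ≠ 0 := sub2 hadd hsub
  apply Int.cast_injective (α := ℂ)
  push_cast
  rw [hue _ ⟨2*j+1, by ring⟩, huo _ ⟨j, by ring⟩, hW]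
  field_simp
  ring

include hV in
private lemma I5 (j : ℕ) : (V j)^2 = c₁*(c₁-4*c₂)*(u (2*j))^2 + 4*c₂^(2*j) := by
  have h2 : ζ^2 - η^2 ≠ 0 := sub2 hadd hsub
  apply Int.cast_injective (α := ℂ)
  push_cast
  rw [hue _ ⟨j, by ring⟩, hV, hc₁, hc₂]
  field_simp
  ring

include hW in
private lemma I5' (j : ℕ) : c₁*(W j)^2 = (c₁-4*c₂)*(u (2*j+1))^2 + 4*c₂^(2*j+1) := by
  apply Int.cast_injective (α := ℂ)
  push_cast
  rw [huo _ ⟨j, by ring⟩, hW, hc₁, hc₂]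
  field_simp
  ring

include hV in
private lemma I6 (m : ℕ) : u (3*m) = u m * (V m + c₂^m) := by
  have h2 : ζ^2 - η^2 ≠ 0 := sub2 hadd hsub
  apply Int.cast_injective (α := ℂ)
  push_cast
  rcases Nat.even_or_odd m with hp | hp
  · obtain ⟨i, rfl⟩ := hp
    rw [hue _ ⟨3*i, by ring⟩, hue _ ⟨i, by ring⟩, hV, hc₂]
    field_simp
    ring
  · obtain ⟨i, rfl⟩ := hp
    rw [huo _ ⟨3*i+1, by ring⟩, huo _ ⟨i, by ring⟩, hV, hc₂]
    field_simp
    ring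

include hV in
private lemma I7 (n m : ℕ) : u (n + 4*m) = V m * u (n + 2*m) - c₂^(2*m) * u n := by
  have h2 : ζ^2 - η^2 ≠ 0 := sub2 hadd hsub
  apply Int.cast_injective (α := ℂ)
  push_cast
  rcases Nat.even_or_odd n with hp | hp
  · obtain ⟨i, rfl⟩ := hp
    rw [hue _ ⟨i+2*m, by ring⟩, hue _ ⟨i+m, by ring⟩, hue _ ⟨i, by ring⟩, hV, hc₂]
    field_simp
    ring
  · obtain ⟨i, rfl⟩ := hp
    rw [huo _ ⟨i+2*m, by ring⟩, huo _ ⟨i+m, by ring⟩, huo _ ⟨i, by ring⟩, hV, hc₂]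
    field_simp
    ring

include hV in
private lemma See (α β : ℕ) :
    2*c₂^(2*β) * u (2*α) = V β * u (2*α+2*β) - V (α+β) * u (2*β) := by
  have h2 : ζ^2 - η^2 ≠ 0 := sub2 hadd hsub
  apply Int.cast_injective (α := ℂ)
  push_cast
  rw [hue _ ⟨α, by ring⟩, hue _ ⟨α+β, by ring⟩, hue _ ⟨β, by ring⟩, hV, hV, hc₂]
  field_simp
  ring

include hV hW in
private lemma Soe (α β : ℕ) :
    2*c₂^(2*β) * u (2*α+1) = V β * u (2*α+1+2*β) - c₁ * W (α+β) * u (2*β) := by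
  have h2 : ζ^2 - η^2 ≠ 0 := sub2 hadd hsub
  apply Int.cast_injective (α := ℂ)
  push_cast
  rw [huo _ ⟨α, by ring⟩, huo _ ⟨α+β, by ring⟩, hue _ ⟨β, by ring⟩, hV, hW, hc₁, hc₂]
  field_simp
  ring

include hW in
private lemma Seo (α β : ℕ) :
    2*c₂^(2*β+1) * u (2*α) = W β * u (2*α+2*β+1) - W (α+β) * u (2*β+1) := by
  have h2 : ζ^2 - η^2 ≠ 0 := sub2 hadd hsub
  apply Int.cast_injective (α := ℂ)
  push_cast
  rw [hue _ ⟨α, by ring⟩, huo _ ⟨α+β, by ring⟩, huo _ ⟨β, by ring⟩, hW, hW, hc₂]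
  field_simp
  ring

include hV hW in
private lemma Soo (α β : ℕ) :
    2*c₂^(2*β+1) * u (2*α+1) = c₁ * W β * u (2*α+2*β+2) - V (α+β+1) * u (2*β+1) := by
  have h2 : ζ^2 - η^2 ≠ 0 := sub2 hadd hsub
  apply Int.cast_injective (α := ℂ)
  push_cast
  rw [huo _ ⟨α, by ring⟩, hue _ ⟨α+β+1, by ring⟩, huo _ ⟨β, by ring⟩, hV, hW, hc₁, hc₂]
  field_simp
  ring

end identities

/- 2-adic valuation helpers. -/

private lemma nu_dvd_iff {x : ℤ} (hx : x ≠ 0) (n : ℕ) :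
    (2:ℤ)^n ∣ x ↔ n ≤ padicValInt 2 x := by
  have := padicValInt_dvd_iff (p := 2) n x
  push_cast at this
  rw [this]
  simp [hx]

private lemma nu_pow_dvd {x : ℤ} (hx : x ≠ 0) : (2:ℤ)^(padicValInt 2 x) ∣ x :=
  (nu_dvd_iff hx _).mpr le_rfl

private lemma nu_eq {x : ℤ} (hx : x ≠ 0) {a : ℕ} (h1 : (2:ℤ)^a ∣ x)
    (h2 : ¬ (2:ℤ)^(a+1) ∣ x) : padicValInt 2 x = a := by
  have l1 := (nu_dvd_iff hx a).mp h1
  have l2 : ¬ (a+1 ≤ padicValInt 2 x) := fun h => h2 ((nu_dvd_iff hx _).mpr h)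
  omega

private lemma nu_odd {x : ℤ} (h : Odd x) : padicValInt 2 x = 0 := by
  have h' := Int.odd_iff.mp h
  have hx : x ≠ 0 := by omega
  refine nu_eq hx (by norm_num) ?_
  simp only [pow_one, zero_add]
  omega

private lemma nu_mul {x y : ℤ} (hx : x ≠ 0) (hy : y ≠ 0) :
    padicValInt 2 (x*y) = padicValInt 2 x + padicValInt 2 y :=
  padicValInt.mul hx hy

private lemma nu_sub {x y : ℤ} (hy : y ≠ 0) {a : ℕ} (hvy : padicValInt 2 y = a)
    (hx : (2:ℤ)^(a+1) ∣ x) : padicValInt 2 (x - y) = a := by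
  have hy1 : (2:ℤ)^a ∣ y := by rw [← hvy] at *; exact nu_pow_dvd hy
  have hy2 : ¬ (2:ℤ)^(a+1) ∣ y := by
    intro h; have := (nu_dvd_iff hy (a+1)).mp h; omega
  have hne : x - y ≠ 0 := by rintro h; exact hy2 (by rwa [sub_eq_zero.mp h] at hx)
  refine nu_eq hne (dvd_sub (dvd_trans (pow_dvd_pow 2 (Nat.le_succ a)) hx) hy1) ?_
  intro h
  have hyy : y = x - (x - y) := by ring
  exact hy2 (hyy ▸ dvd_sub hx h)

private lemma odd_coprime_pow {y : ℤ} (hy : Odd y) (k : ℕ) : IsCoprime ((2:ℤ)^k) y := by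
  refine IsCoprime.pow_left ?_
  rw [Int.isCoprime_iff_gcd_eq_one]
  show Nat.gcd (Int.natAbs 2) y.natAbs = 1
  have h2 : (2:ℤ).natAbs = 2 := rfl
  rw [h2]
  exact Nat.coprime_two_left.mpr (Int.natAbs_odd.mpr hy)

private lemma odd_dvd_cancel {y x : ℤ} (hy : Odd y) (h : 4 ∣ y * x) : 4 ∣ x := by
  have hc := (odd_coprime_pow hy 2)
  have h4 : (4:ℤ) = 2^2 := by norm_num
  rw [h4] at h ⊢
  exact hc.dvd_of_dvd_mul_left h

private lemma eight_dvd_mul {x y : ℤ} (hx : (2:ℤ) ∣ x) (hy : (4:ℤ) ∣ y) :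
    (8:ℤ) ∣ x * y := by
  obtain ⟨p, hp⟩ := hx; obtain ⟨q, hq⟩ := hy
  exact ⟨p*q, by rw [hp, hq]; ring⟩

/-- If `c₂` is odd then for every integer `k ≥ 2`,
`ρ(2^k) = 2^(max(k − ν₂(ũ_{ρ(4)}), 0)) · ρ(4)`. -/
theorem stmt_6
    (ζ η : ℂ) (c₁ c₂ : ℤ)
    (hc₁ : (c₁ : ℂ) = (ζ + η) ^ 2) (hc₂ : (c₂ : ℂ) = ζ * η)
    (hc₁0 : c₁ ≠ 0) (hc₂0 : c₂ ≠ 0) (hcop : IsCoprime c₁ c₂)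
    (habs : ‖η‖ ≤ ‖ζ‖)
    (hru : ∀ k : ℕ, 0 < k → (ζ / η) ^ k ≠ 1)
    (u : ℕ → ℤ)
    (hu : ∀ k : ℕ, (u k : ℂ) =
      if Odd k then (ζ ^ k - η ^ k) / (ζ - η) else (ζ ^ k - η ^ k) / (ζ ^ 2 - η ^ 2))
    (ρ : ℕ → ℕ)
    (hρ : ∀ m : ℕ, 0 < m → Int.gcd (m : ℤ) c₂ = 1 →
      0 < ρ m ∧ (m : ℤ) ∣ u (ρ m) ∧ ∀ k : ℕ, 0 < k → (m : ℤ) ∣ u k → ρ m ≤ k)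
    (hodd : Odd c₂) :
    ∀ k : ℕ, 2 ≤ k →
      ρ (2 ^ k) = 2 ^ (k - padicValInt 2 (u (ρ 4))) * ρ 4 := by
  -- ### basic nonvanishing facts
  have hη : η ≠ 0 := by
    rintro rfl
    exact hc₂0 (by exact_mod_cast (by rw [hc₂]; ring : (c₂:ℂ) = 0))
  have hζη : ζ ≠ η := by
    intro h
    exact hru 1 one_pos (by rw [pow_one, h, div_self hη])
  have hsub : ζ - η ≠ 0 := sub_ne_zero.mpr hζη
  have hadd : ζ + η ≠ 0 := by
    intro h
    exact hc₁0 (by exact_mod_cast (by rw [hc₁, h]; ring : (c₁:ℂ) = 0))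
  have h2 : ζ^2 - η^2 ≠ 0 := sub2 hadd hsub
  have hpow : ∀ n : ℕ, 0 < n → ζ^n - η^n ≠ 0 := by
    intro n hn h
    apply hru n hn
    rw [div_pow, sub_eq_zero.mp h, div_self (pow_ne_zero _ hη)]
  have huo : ∀ n, Odd n → (u n : ℂ) = (ζ^n - η^n)/(ζ - η) := by
    intro n hn; rw [hu n, if_pos hn]
  have hue : ∀ n, Even n → (u n : ℂ) = (ζ^n - η^n)/(ζ^2 - η^2) := by
    intro n hn; rw [hu n, if_neg (Nat.not_odd_iff_even.mpr hn)]
  have hune : ∀ n, 0 < n → u n ≠ 0 := by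
    intro n hn h0
    have h0' : (u n : ℂ) = 0 := by rw [h0]; norm_num
    rcases Nat.even_or_odd n with hp | hp
    · rw [hue n hp, div_eq_zero_iff] at h0'
      rcases h0' with h | h
      · exact hpow n hn h
      · exact h2 h
    · rw [huo n hp, div_eq_zero_iff] at h0'
      rcases h0' with h | h
      · exact hpow n hn h
      · exact hsub h
  have hu1 : u 1 = 1 := by
    apply Int.cast_injective (α := ℂ)
    rw [huo 1 odd_one]
    push_cast
    rw [pow_one, pow_one, div_self hsub]
  -- companion sequences
  set V : ℕ → ℤ := Vs c₁ c₂ with hVdef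
  set W : ℕ → ℤ := Ws c₁ c₂ with hWdef
  have hV : ∀ j, (V j : ℂ) = ζ^(2*j) + η^(2*j) := Vcast hc₁ hc₂
  have hW : ∀ j, (W j : ℂ) = (ζ^(2*j+1) + η^(2*j+1))/(ζ + η) := Wcast hadd hc₁ hc₂
  -- ### parity lemma: if c₁ is even, every odd-indexed term is odd
  have hP : (2:ℤ) ∣ c₁ → ∀ i, ¬ (2:ℤ) ∣ u (2*i+1) := by
    intro he i
    induction i with
    | zero =>
      rw [show 2*0+1 = 1 from by norm_num, hu1]
      intro h; omega
    | succ n ih =>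
      have hrec := I1 hadd hsub huo hue hc₁ hc₂ n
      rw [show 2*(n+1)+1 = 2*n+3 from by ring]
      have hY : (2:ℤ) ∣ c₁ * u (2*n+2) := he.mul_right _
      have hX : (c₂ * u (2*n+1)) % 2 = 1 := by
        have h1 := Int.odd_iff.mp hodd
        have h2' : (u (2*n+1)) % 2 = 1 := by omega
        exact Int.odd_iff.mp ((Int.odd_iff.mpr h1).mul (Int.odd_iff.mpr h2'))
      omega
  -- ### companion valuations
  have two_dvd_of_nu_one : ∀ x : ℤ, x ≠ 0 → padicValInt 2 x = 1 → (2:ℤ) ∣ x := by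
    intro x hx h1
    have := nu_pow_dvd hx
    rwa [h1, pow_one] at this
  have hCV : ∀ j, (4:ℤ) ∣ u (2*j) → padicValInt 2 (V j) = 1 ∧ V j ≠ 0 := by
    intro j h4
    have hI := I5 hadd hsub huo hue hc₁ hc₂ hV j
    obtain ⟨w, hw⟩ := h4
    have hC : (c₂^(2*j)) % 2 = 1 := Int.odd_iff.mp hodd.pow
    have hsq : (V j)^2 = 16*(c₁*(c₁-4*c₂)*w^2) + 4*c₂^(2*j) := by rw [hI, hw]; ring
    have hne2 : (V j)^2 ≠ 0 := by omega
    have hVne : V j ≠ 0 := fun h => hne2 (by rw [h]; ring)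
    have hd1 : (2:ℤ)^2 ∣ (V j)^2 := by
      rw [show (2:ℤ)^2 = 4 from by norm_num]; omega
    have hd2 : ¬ (2:ℤ)^(2+1) ∣ (V j)^2 := by
      rw [show (2:ℤ)^(2+1) = 8 from by norm_num]; omega
    have hval := nu_eq hne2 hd1 hd2
    rw [pow_two, nu_mul hVne hVne] at hval
    exact ⟨by omega, hVne⟩
  have hCW : ∀ j, (4:ℤ) ∣ u (2*j+1) → padicValInt 2 (W j) = 1 ∧ W j ≠ 0 := by
    intro j h4
    have hc₁o : ¬ (2:ℤ) ∣ c₁ := by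
      intro h
      exact hP h j (dvd_trans (by norm_num) h4)
    have hI := I5' hadd hsub huo hue hc₁ hc₂ hW j
    obtain ⟨w, hw⟩ := h4
    have hC : (c₂^(2*j+1)) % 2 = 1 := Int.odd_iff.mp hodd.pow
    have hsq : c₁*(W j)^2 = 16*((c₁-4*c₂)*w^2) + 4*c₂^(2*j+1) := by rw [hI, hw]; ring
    have hne2 : c₁*(W j)^2 ≠ 0 := by omega
    have hWne : W j ≠ 0 := by
      intro h; rw [h] at hne2; simp at hne2
    have hd1 : (2:ℤ)^2 ∣ c₁*(W j)^2 := by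
      rw [show (2:ℤ)^2 = 4 from by norm_num]; omega
    have hd2 : ¬ (2:ℤ)^(2+1) ∣ c₁*(W j)^2 := by
      rw [show (2:ℤ)^(2+1) = 8 from by norm_num]; omega
    have hval := nu_eq hne2 hd1 hd2
    rw [pow_two, ← mul_assoc, nu_mul (mul_ne_zero hc₁0 hWne) hWne,
        nu_mul hc₁0 hWne, nu_odd (Int.odd_iff.mpr (by omega))] at hval
    exact ⟨by omega, hWne⟩
  -- ### doubling lemma
  have hD : ∀ m, 0 < m → (4:ℤ) ∣ u m →
      padicValInt 2 (u (2*m)) = padicValInt 2 (u m) + 1 := by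
    intro m hm h4
    rcases Nat.even_or_odd m with hp | hp
    · obtain ⟨j, rfl⟩ := hp
      rw [show j+j = 2*j from by ring] at h4 hm ⊢
      rw [show 2*(2*j) = 4*j from by ring]
      have hcv := hCV j h4
      rw [I2 hadd hsub huo hue hc₁ hc₂ hV j, nu_mul (hune _ (by omega)) hcv.2, hcv.1]
    · obtain ⟨j, rfl⟩ := hp
      rw [show 2*(2*j+1) = 4*j+2 from by ring]
      have hcw := hCW j h4
      rw [I3 hadd hsub huo hue hc₁ hc₂ hW j, nu_mul (hune _ (by omega)) hcw.2, hcw.1]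
  -- ### odd multiples preserve the valuation
  have hO : ∀ m, 0 < m → (4:ℤ) ∣ u m → ∀ i,
      padicValInt 2 (u ((2*i+1)*m)) = padicValInt 2 (u m) := by
    intro m hm h4
    have h42 : (4:ℤ) ∣ u (2*m) := by
      have hd := hD m hm h4
      have hν2 : 2 ≤ padicValInt 2 (u m) := by
        refine (nu_dvd_iff (hune m hm) 2).mp ?_
        rw [show (2:ℤ)^2 = 4 from by norm_num]; exact h4
      have := (nu_dvd_iff (hune (2*m) (by omega)) 2).mpr (by omega)
      rwa [show (2:ℤ)^2 = 4 from by norm_num] at this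
    have hcv := hCV m h42
    have hVm2 : (2:ℤ) ∣ V m := two_dvd_of_nu_one _ hcv.2 hcv.1
    have hCodd : (c₂^m) % 2 = 1 := Int.odd_iff.mp hodd.pow
    have hfac : Odd (V m + c₂^m) := by
      obtain ⟨p, hp⟩ := hVm2
      exact Int.odd_iff.mpr (by omega)
    have base1 : padicValInt 2 (u (3*m)) = padicValInt 2 (u m) := by
      have hfz : V m + c₂^m ≠ 0 := by
        have := Int.odd_iff.mp hfac; omega
      rw [I6 hadd hsub huo hue hc₁ hc₂ hV m, nu_mul (hune m hm) hfz, nu_odd hfac]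
      omega
    have key : ∀ i, padicValInt 2 (u ((2*i+1)*m)) = padicValInt 2 (u m) ∧
        padicValInt 2 (u ((2*(i+1)+1)*m)) = padicValInt 2 (u m) := by
      intro i
      induction i with
      | zero =>
        constructor
        · rw [show (2*0+1)*m = m from by ring]
        · rw [show (2*(0+1)+1)*m = 3*m from by ring]; exact base1
      | succ n ih =>
        refine ⟨ih.2, ?_⟩
        have hI := I7 hadd hsub huo hue hc₁ hc₂ hV ((2*n+1)*m) m
        rw [show (2*n+1)*m + 4*m = (2*(n+1+1)+1)*m from by ring,
            show (2*n+1)*m + 2*m = (2*(n+1)+1)*m from by ring] at hI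
        rw [hI]
        have hpos1 : 0 < (2*n+1)*m := by positivity
        have hpos2 : 0 < (2*(n+1)+1)*m := by positivity
        have hyne : c₂^(2*m) * u ((2*n+1)*m) ≠ 0 :=
          mul_ne_zero (pow_ne_zero _ hc₂0) (hune _ hpos1)
        have hvy : padicValInt 2 (c₂^(2*m) * u ((2*n+1)*m)) = padicValInt 2 (u m) := by
          rw [nu_mul (pow_ne_zero _ hc₂0) (hune _ hpos1), nu_odd hodd.pow, ih.1]
          omega
        refine nu_sub hyne hvy ?_
        have hdu : (2:ℤ)^(padicValInt 2 (u m)) ∣ u ((2*(n+1)+1)*m) := by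
          have := nu_pow_dvd (hune _ hpos2)
          rwa [ih.2] at this
        rw [show (2:ℤ)^(padicValInt 2 (u m)+1) = 2 * 2^(padicValInt 2 (u m)) from by ring]
        exact mul_dvd_mul hVm2 hdu
    intro i; exact (key i).1
  -- ### full valuation formula on multiples
  have hL2 : ∀ m, 0 < m → (4:ℤ) ∣ u m → ∀ s t, Odd t →
      padicValInt 2 (u (m*(2^s*t))) = padicValInt 2 (u m) + s := by
    intro m hm h4
    have hν2 : 2 ≤ padicValInt 2 (u m) := by
      refine (nu_dvd_iff (hune m hm) 2).mp ?_
      rw [show (2:ℤ)^2 = 4 from by norm_num]; exact h4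
    intro s
    induction s with
    | zero =>
      intro t ht
      obtain ⟨i, rfl⟩ := ht
      rw [show m*(2^0*(2*i+1)) = (2*i+1)*m from by ring, hO m hm h4 i]
      omega
    | succ s ih =>
      intro t ht
      have ht0 : 0 < t := by
        obtain ⟨i, rfl⟩ := ht; omega
      have hm' : 0 < m*(2^s*t) := by positivity
      have hv' := ih t ht
      have h4' : (4:ℤ) ∣ u (m*(2^s*t)) := by
        have := (nu_dvd_iff (hune _ hm') 2).mpr (by omega)
        rwa [show (2:ℤ)^2 = 4 from by norm_num] at this
      have hdd := hD _ hm' h4'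
      rw [show m*(2^(s+1)*t) = 2*(m*(2^s*t)) from by ring, hdd, hv']
      omega
  -- ### subtraction step for the index set of multiples of 4
  have hSub : ∀ a b, 0 < a → 0 < b → (4:ℤ) ∣ u b → (4:ℤ) ∣ u (a+b) → (4:ℤ) ∣ u a := by
    intro a b ha hb h4b h4n
    have hcpow : ∀ n : ℕ, Odd (c₂^n) := fun n => hodd.pow
    rcases Nat.even_or_odd a with hpa | hpa <;> rcases Nat.even_or_odd b with hpb | hpb
    · -- a even, b even
      obtain ⟨α, hα⟩ := hpa; obtain ⟨β, hβ⟩ := hpb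
      have hid := See hadd hsub huo hue hc₁ hc₂ hV α β
      rw [show 2*α+2*β = a+b from by omega, show 2*α = a from by omega,
          show 2*β = b from by omega] at hid
      have hcv1 := hCV β (by rw [show 2*β = b from by omega]; exact h4b)
      have hcv2 := hCV (α+β) (by rw [show 2*(α+β) = a+b from by omega]; exact h4n)
      have h81 : (8:ℤ) ∣ V β * u (a+b) :=
        eight_dvd_mul (two_dvd_of_nu_one _ hcv1.2 hcv1.1) h4n
      have h82 : (8:ℤ) ∣ V (α+β) * u b :=
        eight_dvd_mul (two_dvd_of_nu_one _ hcv2.2 hcv2.1) h4b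
      have h8 : (8:ℤ) ∣ 2*c₂^b * u a := hid ▸ dvd_sub h81 h82
      have he' : 2*c₂^b*u a = 2*(c₂^b*u a) := by ring
      refine odd_dvd_cancel (hcpow b) ?_
      omega
    · -- a even, b odd
      obtain ⟨α, hα⟩ := hpa; obtain ⟨β, hβ⟩ := hpb
      have hid := Seo hadd hsub huo hue hc₁ hc₂ hW α β
      rw [show 2*α+2*β+1 = a+b from by omega, show 2*α = a from by omega,
          show 2*β+1 = b from by omega] at hid
      have hcw1 := hCW β (by rw [show 2*β+1 = b from by omega]; exact h4b)
      have hcw2 := hCW (α+β) (by rw [show 2*(α+β)+1 = a+b from by omega]; exact h4n)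
      have h81 : (8:ℤ) ∣ W β * u (a+b) :=
        eight_dvd_mul (two_dvd_of_nu_one _ hcw1.2 hcw1.1) h4n
      have h82 : (8:ℤ) ∣ W (α+β) * u b :=
        eight_dvd_mul (two_dvd_of_nu_one _ hcw2.2 hcw2.1) h4b
      have h8 : (8:ℤ) ∣ 2*c₂^b * u a := hid ▸ dvd_sub h81 h82
      have he' : 2*c₂^b*u a = 2*(c₂^b*u a) := by ring
      refine odd_dvd_cancel (hcpow b) ?_
      omega
    · -- a odd, b even
      obtain ⟨α, hα⟩ := hpa; obtain ⟨β, hβ⟩ := hpb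
      have hid := Soe hadd hsub huo hue hc₁ hc₂ hV hW α β
      rw [show 2*α+1+2*β = a+b from by omega, show 2*α+1 = a from by omega,
          show 2*β = b from by omega] at hid
      have hcv1 := hCV β (by rw [show 2*β = b from by omega]; exact h4b)
      have hcw2 := hCW (α+β) (by rw [show 2*(α+β)+1 = a+b from by omega]; exact h4n)
      have h81 : (8:ℤ) ∣ V β * u (a+b) :=
        eight_dvd_mul (two_dvd_of_nu_one _ hcv1.2 hcv1.1) h4n
      have h82 : (8:ℤ) ∣ c₁ * W (α+β) * u b := by
        rw [show c₁ * W (α+β) * u b = c₁ * (W (α+β) * u b) from by ring]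
        exact Dvd.dvd.mul_left
          (eight_dvd_mul (two_dvd_of_nu_one _ hcw2.2 hcw2.1) h4b) c₁
      have h8 : (8:ℤ) ∣ 2*c₂^b * u a := hid ▸ dvd_sub h81 h82
      have he' : 2*c₂^b*u a = 2*(c₂^b*u a) := by ring
      refine odd_dvd_cancel (hcpow b) ?_
      omega
    · -- a odd, b odd
      obtain ⟨α, hα⟩ := hpa; obtain ⟨β, hβ⟩ := hpb
      have hid := Soo hadd hsub huo hue hc₁ hc₂ hV hW α β
      rw [show 2*α+2*β+2 = a+b from by omega, show 2*α+1 = a from by omega,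
          show 2*β+1 = b from by omega] at hid
      have hcw1 := hCW β (by rw [show 2*β+1 = b from by omega]; exact h4b)
      have hcv2 := hCV (α+β+1) (by rw [show 2*(α+β+1) = a+b from by omega]; exact h4n)
      have h81 : (8:ℤ) ∣ c₁ * W β * u (a+b) := by
        rw [show c₁ * W β * u (a+b) = c₁ * (W β * u (a+b)) from by ring]
        exact Dvd.dvd.mul_left
          (eight_dvd_mul (two_dvd_of_nu_one _ hcw1.2 hcw1.1) h4n) c₁
      have h82 : (8:ℤ) ∣ V (α+β+1) * u b :=
        eight_dvd_mul (two_dvd_of_nu_one _ hcv2.2 hcv2.1) h4b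
      have h8 : (8:ℤ) ∣ 2*c₂^b * u a := hid ▸ dvd_sub h81 h82
      have he' : 2*c₂^b*u a = 2*(c₂^b*u a) := by ring
      refine odd_dvd_cancel (hcpow b) ?_
      omega
  -- ### rank of appearance of 4
  have gcd4 : Int.gcd ((4:ℕ):ℤ) c₂ = 1 := by
    rw [show (((4:ℕ):ℤ)) = 2^2 from by norm_num]
    exact Int.isCoprime_iff_gcd_eq_one.mp (odd_coprime_pow hodd 2)
  obtain ⟨hr0, hr4, hrmin⟩ := hρ 4 (by norm_num) gcd4
  set r := ρ 4 with hrdef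
  have hr4' : (4:ℤ) ∣ u r := by exact_mod_cast hr4
  -- ### the index set of multiples of 4 is exactly the multiples of r
  have hL1 : ∀ n, 0 < n → (4:ℤ) ∣ u n → r ∣ n := by
    intro n
    induction n using Nat.strong_induction_on with
    | _ n IH =>
      intro hn h4
      have hrn : r ≤ n := hrmin n hn (by exact_mod_cast h4)
      rcases eq_or_lt_of_le hrn with he | hlt
      · exact he ▸ dvd_refl r
      · have ha : 0 < n - r := by omega
        have h4a : (4:ℤ) ∣ u (n - r) := by
          refine hSub (n-r) r ha hr0 hr4' ?_
          rw [show n-r+r = n from by omega]; exact h4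
        have hdvd := IH (n-r) (by omega) ha h4a
        have : n = (n - r) + r := by omega
        rw [this]
        exact Nat.dvd_add hdvd dvd_rfl
  -- ### final assembly
  intro k hk
  have gcd2k : Int.gcd ((2^k:ℕ):ℤ) c₂ = 1 := by
    rw [show (((2^k:ℕ):ℤ)) = 2^k from by push_cast; ring]
    exact Int.isCoprime_iff_gcd_eq_one.mp (odd_coprime_pow hodd k)
  obtain ⟨hk0, hkdvd, hkmin⟩ := hρ (2^k) (by positivity) gcd2k
  set v := padicValInt 2 (u r) with hvdef
  have hν2 : 2 ≤ v := by
    refine (nu_dvd_iff (hune r hr0) 2).mp ?_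
    rw [show (2:ℤ)^2 = 4 from by norm_num]; exact hr4'
  set M := 2^(k - v) * r with hMdef
  have hM0 : 0 < M := by positivity
  have hMval : padicValInt 2 (u M) = v + (k - v) := by
    have := hL2 r hr0 hr4' (k - v) 1 odd_one
    rwa [show r*(2^(k-v)*1) = M from by rw [hMdef]; ring] at this
  have hMdvd : ((2^k:ℕ):ℤ) ∣ u M := by
    have h1 : (2:ℤ)^k ∣ u M := (nu_dvd_iff (hune M hM0) k).mpr (by omega)
    exact_mod_cast h1
  have hle : ρ (2^k) ≤ M := hkmin M hM0 hMdvd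
  have h4R : (4:ℤ) ∣ u (ρ (2^k)) := by
    have h2k : ((2:ℤ))^k ∣ u (ρ (2^k)) := by exact_mod_cast hkdvd
    refine dvd_trans ?_ h2k
    rw [show (4:ℤ) = 2^2 from by norm_num]
    exact pow_dvd_pow 2 hk
  obtain ⟨t, ht⟩ := hL1 _ hk0 h4R
  have ht0 : 0 < t := by
    rcases Nat.eq_zero_or_pos t with h | h
    · rw [h, Nat.mul_zero] at ht; omega
    · exact h
  obtain ⟨s, t', ht', hts⟩ := Nat.exists_eq_two_pow_mul_odd (n := t) (by omega)
  have hval : padicValInt 2 (u (ρ (2^k))) = v + s := by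
    have := hL2 r hr0 hr4' s t' ht'
    rwa [show r*(2^s*t') = ρ (2^k) from by rw [ht, hts]] at this
  have hks : k ≤ v + s := by
    have := (nu_dvd_iff (hune _ hk0) k).mp (by exact_mod_cast hkdvd)
    omega
  have hMle : M ≤ ρ (2^k) := by
    apply Nat.le_of_dvd hk0
    rw [ht, hts, hMdef]
    calc 2^(k-v) * r ∣ 2^s * r := Nat.mul_dvd_mul (pow_dvd_pow 2 (by omega)) dvd_rfl
    _ ∣ r * (2^s*t') := ⟨t', by ring⟩
  omega
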